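/- arXiv:0905.1763 — 3 statements merged into one kernel-verified Lean document; each statement's English description precedes it below -/
import Mathlib

section
/- If G is a connected triangle-free graph with more than one vertex, then k(G) = |E(G)| - |V(G)| + 2. -/
open SimpleGraph

/-- The competition graph of a digraph `D` (given as a relation): distinct vertices
`x`, `y` are adjacent iff they have a common out-neighbor in `D`. -/
def CompetitionGraph {V : Type*} (D : V → V → Prop) : SimpleGraph V where
  Adj x y := x ≠ y ∧ ∃ v, D x v ∧ D y v
  symm := ⟨by rintro x y ⟨h, v, hx, hy⟩; exact ⟨h.symm, v, hy, hx⟩⟩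
  loopless := ⟨by rintro x ⟨h, -⟩; exact h rfl⟩

/-- A digraph is acyclic iff it has no directed cycle, i.e. no vertex reaches itself
by a nonempty directed walk. -/
def DigraphAcyclic {V : Type*} (D : V → V → Prop) : Prop :=
  ∀ v, ¬ Relation.TransGen D v v

/-- The graph `G` together with `k` additional isolated vertices. -/
def addIsolated {V : Type*} (G : SimpleGraph V) (k : ℕ) : SimpleGraph (V ⊕ Fin k) where
  Adj a b := ∃ x y, a = Sum.inl x ∧ b = Sum.inl y ∧ G.Adj x y
  symm := ⟨by rintro a b ⟨x, y, rfl, rfl, h⟩; exact ⟨y, x, rfl, rfl, h.symm⟩⟩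
  loopless := ⟨by
    rintro a ⟨x, y, rfl, hy, h⟩
    obtain rfl := Sum.inl_injective hy
    exact G.ne_of_adj h rfl⟩

/-- `G` plus `k` isolated vertices is the competition graph of some acyclic digraph. -/
def IsCompetitionWitness {V : Type*} (G : SimpleGraph V) (k : ℕ) : Prop :=
  ∃ D : (V ⊕ Fin k) → (V ⊕ Fin k) → Prop,
    DigraphAcyclic D ∧ CompetitionGraph D = addIsolated G k

/-- The competition number of `G`: the least `k` such that `G` plus `k` isolated
vertices is the competition graph of an acyclic digraph. -/
noncomputable def compNum {V : Type*} (G : SimpleGraph V) : ℕ :=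
  sInf {k | IsCompetitionWitness G k}

/-- The generalized edge clique cover number `θ_E(F; H)`: the minimum number of cliques
of `G` contained in the vertex set `H` (i.e. cliques of the induced subgraph on `H`)
needed so that every edge in `F` has both endpoints in some clique of the family. -/
noncomputable def thetaEOn {V : Type*} (G : SimpleGraph V) (F : Set (Sym2 V)) (H : Set V) : ℕ :=
  sInf {n | ∃ f : Fin n → Set V,
    (∀ i, f i ⊆ H ∧ G.IsClique (f i)) ∧ ∀ e ∈ F, ∃ i, ∀ x ∈ e, x ∈ f i}

/-- The edge clique cover number `θ_E(G)`. -/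
noncomputable def thetaE {V : Type*} (G : SimpleGraph V) : ℕ :=
  thetaEOn G G.edgeSet Set.univ

/-- The vertex clique cover number of the subgraph of `G` induced on `S`: the minimum
number of cliques of `G` contained in `S` whose union covers `S`. -/
noncomputable def thetaVOn {V : Type*} (G : SimpleGraph V) (S : Set V) : ℕ :=
  sInf {n | ∃ f : Fin n → Set V,
    (∀ i, f i ⊆ S ∧ G.IsClique (f i)) ∧ ∀ v ∈ S, ∃ i, v ∈ f i}

/-- The closed neighborhood `N_G[U]` of a vertex subset. -/
def closedNbhd {V : Type*} (G : SimpleGraph V) (U : Set V) : Set V :=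
  U ∪ {v | ∃ u ∈ U, G.Adj u v}

/-- The set `E_G[U]` of edges of `G` with at least one endpoint in `U`. -/
def incidentEdges {V : Type*} (G : SimpleGraph V) (U : Set V) : Set (Sym2 V) :=
  {e | e ∈ G.edgeSet ∧ ∃ x ∈ e, x ∈ U}

private lemma no_triangle {V : Type*} {G : SimpleGraph V} (htri : G.CliqueFree 3)
    {a b c : V} (hab : G.Adj a b) (hac : G.Adj a c) (hbc : G.Adj b c) : False := by
  classical
  refine htri {a, b, c} ⟨?_, ?_⟩
  · intro x hx y hy hxy
    simp only [Finset.coe_insert, Set.mem_insert_iff, Finset.coe_singleton,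
      Set.mem_singleton_iff] at hx hy
    rcases hx with rfl | rfl | rfl <;> rcases hy with rfl | rfl | rfl <;>
      first | exact absurd rfl hxy | assumption | exact hab.symm | exact hac.symm | exact hbc.symm
  · rw [Finset.card_insert_of_notMem (by simp [hab.ne, hac.ne]),
      Finset.card_insert_of_notMem (by simp [hbc.ne]), Finset.card_singleton]

private lemma sym2_eq_of_mem {V : Type*} {e : Sym2 V} {a b : V}
    (ha : a ∈ e) (hb : b ∈ e) (hab : a ≠ b) : e = s(a, b) := by
  induction e using Sym2.ind with
  | _ x y =>
    rw [Sym2.mem_iff] at ha hb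
    rcases ha with rfl | rfl <;> rcases hb with rfl | rfl <;>
      first | exact absurd rfl hab | rfl | exact Sym2.eq_swap

private lemma two_mem_adj {V : Type*} {G : SimpleGraph V} {s : Sym2 V} (hs : s ∈ G.edgeSet)
    {a b : V} (ha : a ∈ s) (hb : b ∈ s) (hab : a ≠ b) : G.Adj a b := by
  rw [sym2_eq_of_mem ha hb hab, SimpleGraph.mem_edgeSet] at hs
  exact hs

private lemma lower_bound {V : Type*} [Fintype V] {G : SimpleGraph V} [Fintype ↑G.edgeSet]
    (htri : G.CliqueFree 3) (hcard : 1 < Fintype.card V) {k : ℕ}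
    (hw : IsCompetitionWitness G k) :
    G.edgeFinset.card + 2 ≤ Fintype.card V + k := by
  classical
  obtain ⟨D, hac, hcomp⟩ := hw
  let r := Relation.TransGen D
  haveI : IsTrans (V ⊕ Fin k) r := ⟨fun _ _ _ => Relation.TransGen.trans⟩
  haveI : IsIrrefl (V ⊕ Fin k) r := ⟨hac⟩
  have hwf := Finite.wellFounded_of_trans_of_irrefl r
  obtain ⟨x0, y0, hxy0⟩ := Fintype.exists_pair_of_one_lt_card hcard
  obtain ⟨v₁, -, hv₁⟩ := hwf.has_min Set.univ ⟨Sum.inl x0, trivial⟩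
  have hv₁' : ∀ u, ¬ D u v₁ := fun u hd => hv₁ u trivial (Relation.TransGen.single hd)
  have hS2 : ({v :  V ⊕ Fin k | v ≠ v₁} : Set (V ⊕ Fin k)).Nonempty := by
    by_cases h : Sum.inl x0 = v₁
    · exact ⟨Sum.inl y0, fun hh => hxy0 (Sum.inl_injective (hh.trans h.symm)).symm⟩
    · exact ⟨Sum.inl x0, h⟩
  obtain ⟨v₂, hv₂mem, hv₂⟩ := hwf.has_min {v :  V ⊕ Fin k | v ≠ v₁} hS2
  have hv₂' : ∀ u, D u v₂ → u = v₁ := by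
    intro u hd
    by_contra hu
    exact hv₂ u hu (Relation.TransGen.single hd)
  -- adjacency from common prey
  have hadj : ∀ (a b : V) (q : (V ⊕ Fin k)), a ≠ b → D (Sum.inl a) q → D (Sum.inl b) q → G.Adj a b := by
    intro a b q hne ha hb
    have h : (CompetitionGraph D).Adj (Sum.inl a) (Sum.inl b) :=
      ⟨fun hh => hne (Sum.inl_injective hh), q, ha, hb⟩
    rw [hcomp] at h
    obtain ⟨x, y, hx, hy, h⟩ := h
    obtain rfl := Sum.inl_injective hx
    obtain rfl := Sum.inl_injective hy
    exact h
  -- prey of each edge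
  have hprey : ∀ e ∈ G.edgeSet, ∃ q : V ⊕ Fin k, ∀ x ∈ e, D (Sum.inl x) q := by
    intro e he
    induction e using Sym2.ind with
    | _ x y =>
      rw [SimpleGraph.mem_edgeSet] at he
      have h : (addIsolated G k).Adj (Sum.inl x) (Sum.inl y) := ⟨x, y, rfl, rfl, he⟩
      rw [← hcomp] at h
      obtain ⟨-, q, hx, hy⟩ := h
      exact ⟨q, fun z hz => by rcases Sym2.mem_iff.mp hz with rfl | rfl <;> assumption⟩
  choose p hp using hprey
  set P : Sym2 V → (V ⊕ Fin k) := fun e => if h : e ∈ G.edgeSet then p e h else v₁ with hP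
  have hPd : ∀ e (he : e ∈ G.edgeFinset), ∀ x ∈ e, D (Sum.inl x) (P e) := by
    intro e he x hx
    rw [SimpleGraph.mem_edgeFinset] at he
    simp only [hP, dif_pos he]
    exact hp e he x hx
  -- each edge has two distinct endpoints
  have hends : ∀ e ∈ G.edgeFinset, ∃ a b : V, a ≠ b ∧ a ∈ e ∧ b ∈ e := by
    intro e he
    induction e using Sym2.ind with
    | _ x y =>
      rw [SimpleGraph.mem_edgeFinset, SimpleGraph.mem_edgeSet] at he
      exact ⟨x, y, he.ne, Sym2.mem_mk_left _ _, Sym2.mem_mk_right _ _⟩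
  -- P avoids v₁ and v₂
  have hPmem : ∀ e ∈ G.edgeFinset, P e ∈ (Finset.univ.erase v₁).erase v₂ := by
    intro e he
    obtain ⟨a, b, hab, ha, hb⟩ := hends e he
    have hda := hPd e he a ha
    have hdb := hPd e he b hb
    rw [Finset.mem_erase, Finset.mem_erase]
    refine ⟨?_, ?_, Finset.mem_univ _⟩
    · intro h
      rw [h] at hda hdb
      have h1 := hv₂' _ hda
      have h2 := hv₂' _ hdb
      rw [← h2] at h1
      exact hab (Sum.inl_injective h1)
    · intro h; rw [h] at hda; exact hv₁' _ hda
  -- P injective on edges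
  have hPinj : Set.InjOn P ↑G.edgeFinset := by
    intro e₁ he₁ e₂ he₂ hPe
    rw [Finset.mem_coe] at he₁ he₂
    by_contra hne
    obtain ⟨a, b, hab, ha, hb⟩ := hends e₁ he₁
    obtain ⟨c, d, hcd, hc, hd⟩ := hends e₂ he₂
    have hDall : ∀ x ∈ e₂, D (Sum.inl x) (P e₁) := by
      intro x hx; rw [hPe]; exact hPd e₂ he₂ x hx
    have he₁' : e₁ ∈ G.edgeSet := SimpleGraph.mem_edgeFinset.mp he₁
    have hGab : G.Adj a b := two_mem_adj he₁' ha hb hab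
    have key : ∀ x ∈ e₂, x = a ∨ x = b := by
      intro x hx
      by_contra hx'
      push_neg at hx'
      obtain ⟨hxa, hxb⟩ := hx'
      have hGax : G.Adj a x :=
        hadj a x (P e₁) (Ne.symm hxa) (hPd e₁ he₁ a ha) (hDall x hx)
      have hGbx : G.Adj b x :=
        hadj b x (P e₁) (Ne.symm hxb) (hPd e₁ he₁ b hb) (hDall x hx)
      exact no_triangle htri hGab hGax hGbx
    have he₁ab : e₁ = s(a, b) := sym2_eq_of_mem ha hb hab
    have he₂cd : e₂ = s(c, d) := sym2_eq_of_mem hc hd hcd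
    rcases key c hc with rfl | rfl <;> rcases key d hd with rfl | rfl
    · exact hcd rfl
    · exact hne (he₁ab.trans he₂cd.symm)
    · exact hne (he₁ab.trans (Sym2.eq_swap.trans he₂cd.symm))
    · exact hcd rfl
  -- cardinality count
  have hcount := Finset.card_le_card_of_injOn P hPmem hPinj
  have hv21 : v₂ ≠ v₁ := hv₂mem
  have hc1 : ((Finset.univ.erase v₁).erase v₂).card
      = (Finset.univ.erase v₁ : Finset (V ⊕ Fin k)).card - 1 :=
    Finset.card_erase_of_mem (Finset.mem_erase.mpr ⟨hv21, Finset.mem_univ _⟩)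
  have hc2 : (Finset.univ.erase v₁ : Finset (V ⊕ Fin k)).card = Fintype.card (V ⊕ Fin k) - 1 := by
    rw [Finset.card_erase_of_mem (Finset.mem_univ _), Finset.card_univ]
  have hcW : Fintype.card (V ⊕ Fin k) = Fintype.card V + k := by
    simp [Fintype.card_sum]
  omega

private lemma walk_crossing {V : Type*} {G : SimpleGraph V} (S : Set V) :
    ∀ {a b : V}, G.Walk a b → a ∈ S → b ∉ S → ∃ u ∈ S, ∃ v, v ∉ S ∧ G.Adj u v := by
  intro a b w
  induction w with
  | nil => intro h h'; exact absurd h h'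
  | @cons a c b h p ih =>
    intro ha hb
    by_cases hc : c ∈ S
    · exact ih hc hb
    · exact ⟨a, ha, c, hc, h⟩

private lemma exists_good_enum {V : Type*} [Fintype V] [DecidableEq V] (G : SimpleGraph V)
    (hconn : G.Connected) {n : ℕ} (hn : Fintype.card V = n) (hpos : 0 < n) :
    ∃ e : Fin n ≃ V, ∃ par : Fin n → Fin n,
      ∀ i : Fin n, (i : ℕ) ≠ 0 →
        (par i : ℕ) < (i : ℕ) ∧ G.Adj (e (par i)) (e i) := by
  classical
  subst hn
  set n := Fintype.card V with hn
  -- Good lists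
  let Good : List V → Prop := fun L =>
    ∀ (i : ℕ) (hi : i < L.length), i ≠ 0 →
      ∃ j, ∃ hj : j < i, G.Adj (L.get ⟨j, hj.trans hi⟩) (L.get ⟨i, hi⟩)
  have hne : Nonempty V := Fintype.card_pos_iff.mp hpos
  -- extension step
  have main : ∀ d (l : List V), l.Nodup → l ≠ [] → Good l → n ≤ l.length + d →
      ∃ L : List V, L.Nodup ∧ (∀ x, x ∈ L) ∧ Good L := by
    intro d
    induction d with
    | zero =>
      intro l hnd hnil hg hlen
      refine ⟨l, hnd, fun x => ?_, hg⟩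
      have h1 : l.toFinset.card = l.length := List.toFinset_card_of_nodup hnd
      have h3 := Finset.card_le_univ l.toFinset
      have h2 : l.toFinset = Finset.univ := by
        apply Finset.eq_univ_of_card
        omega
      have : x ∈ l.toFinset := h2 ▸ Finset.mem_univ x
      exact List.mem_toFinset.mp this
    | succ d ih =>
      intro l hnd hnil hg hlen
      by_cases hall : ∀ x, x ∈ l
      · exact ⟨l, hnd, hall, hg⟩
      · push_neg at hall
        obtain ⟨v, hv⟩ := hall
        -- find crossing edge
        have hln : l ≠ [] := hnil
        obtain ⟨a, ha⟩ := List.exists_mem_of_ne_nil l hln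
        obtain ⟨u, hu, w, hw, hadj⟩ :=
          walk_crossing {x | x ∈ l} ((hconn a v).some) ha hv
        -- extend by w
        obtain ⟨⟨ju, hju⟩, hju2⟩ := List.mem_iff_get.mp hu
        refine ih (l ++ [w]) ?_ (by simp) ?_ (by simp; omega)
        · rw [List.nodup_append]
          exact ⟨hnd, List.nodup_singleton w, by simp; intro a ha h; subst h; exact hw ha⟩
        · intro i hi hi0
          rw [List.length_append, List.length_singleton] at hi
          by_cases hil : i < l.length
          · obtain ⟨j, hj, hadj'⟩ := hg i hil hi0
            refine ⟨j, hj, ?_⟩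
            simp only [List.get_eq_getElem]
            rw [List.getElem_append_left (hj.trans hil), List.getElem_append_left hil]
            simpa using hadj'
          · have hieq : i = l.length := by omega
            refine ⟨ju, by omega, ?_⟩
            simp only [List.get_eq_getElem]
            have e2 : ∀ (h : i < (l ++ [w]).length), (l ++ [w])[i]'h = w := by
              intro h
              rw [List.getElem_append_right (by omega)]
              simp [hieq]
            rw [List.getElem_append_left hju, e2]
            have hju3 : l[ju]'hju = u := by simpa using hju2
            rw [hju3]
            exact hadj
  obtain ⟨x⟩ := hne
  obtain ⟨L, hnd, hall, hg⟩ := main n [x] (List.nodup_singleton x) (by simp)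
    (by intro i hi hi0; simp at hi; omega) (by simp)
  have hlen : L.length = n := by
    have h1 : L.toFinset.card = L.length := List.toFinset_card_of_nodup hnd
    have h2 : L.toFinset = Finset.univ := Finset.eq_univ_iff_forall.mpr
      (fun x => List.mem_toFinset.mpr (hall x))
    rw [h2, Finset.card_univ] at h1
    omega
  have hbij : Function.Bijective (fun i : Fin n => L.get (Fin.cast hlen.symm i)) := by
    constructor
    · intro i j hij
      have h := (List.nodup_iff_injective_get.mp hnd) hij
      have h2 : (i : ℕ) = (j : ℕ) := by simpa using congrArg Fin.val h
      exact Fin.ext h2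
    · intro y
      obtain ⟨⟨j, hj⟩, hj2⟩ := List.mem_iff_get.mp (hall y)
      exact ⟨⟨j, by omega⟩, hj2⟩
  set e : Fin n ≃ V := Equiv.ofBijective _ hbij with he
  have hpar : ∀ i : Fin n, ∃ j : Fin n, (i : ℕ) ≠ 0 → (j : ℕ) < (i : ℕ) ∧ G.Adj (e j) (e i) := by
    intro i
    by_cases hi0 : (i : ℕ) = 0
    · exact ⟨i, fun h => absurd hi0 h⟩
    · obtain ⟨j, hj, hadj⟩ := hg (i : ℕ) (by omega) hi0
      refine ⟨⟨j, by omega⟩, fun _ => ⟨hj, ?_⟩⟩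
      exact hadj
  choose par hpar using hpar
  exact ⟨e, par, hpar⟩

private lemma upper_bound {V : Type*} [Fintype V] {G : SimpleGraph V} [Fintype ↑G.edgeSet]
    (hconn : G.Connected) (hcard : 1 < Fintype.card V) :
    ∃ k, IsCompetitionWitness G k ∧ k + Fintype.card V = G.edgeFinset.card + 2 := by
  classical
  obtain ⟨n, hn⟩ : ∃ n, Fintype.card V = n := ⟨_, rfl⟩
  rw [hn] at hcard ⊢
  obtain ⟨e, par, hpar⟩ := exists_good_enum G hconn hn (by omega)
  have hn2 : 2 ≤ n := hcard
  set g : Fin n → Sym2 V := fun i => s(e (par i), e i) with hg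
  have hgE : ∀ i : Fin n, (i : ℕ) ≠ 0 → g i ∈ G.edgeFinset := by
    intro i h
    rw [hg, SimpleGraph.mem_edgeFinset, SimpleGraph.mem_edgeSet]
    exact (hpar i h).2
  have hginj : ∀ i j : Fin n, (i : ℕ) ≠ 0 → (j : ℕ) ≠ 0 → g i = g j → i = j := by
    intro i j hi hj hgij
    rw [hg, Sym2.eq_iff] at hgij
    rcases hgij with ⟨h1, h2⟩ | ⟨h1, h2⟩
    · exact e.injective h2
    · have h1' : par i = j := e.injective h1
      have h2' : i = par j := e.injective h2
      have ha := (hpar i hi).1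
      have hb := (hpar j hj).1
      rw [h1'] at ha
      rw [← h2'] at hb
      omega
  have h0n : 0 < n := by omega
  have hlastn : n - 1 < n := by omega
  set a0 : Fin n := ⟨0, h0n⟩ with ha0
  set alast : Fin n := ⟨n - 1, hlastn⟩ with halast
  set F : Finset (Fin n) := Finset.univ.filter (fun i => i ≠ a0 ∧ i ≠ alast) with hF
  set F1 : Finset (Fin n) := Finset.univ.filter (fun i => i ≠ a0) with hF1
  have hmemF1 : ∀ i : Fin n, i ∈ F1 ↔ (i : ℕ) ≠ 0 := by
    intro i
    simp [hF1, Fin.ext_iff, ha0]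
  have hmemF : ∀ i : Fin n, i ∈ F ↔ (i : ℕ) ≠ 0 ∧ (i : ℕ) + 1 ≠ n := by
    intro i
    have := i.isLt
    simp only [hF, Finset.mem_filter, Finset.mem_univ, true_and, Ne, Fin.ext_iff, ha0, halast]
    constructor
    · rintro ⟨h1, h2⟩; exact ⟨h1, by omega⟩
    · rintro ⟨h1, h2⟩; exact ⟨h1, by omega⟩
  have hF1card : F1.card = n - 1 := by
    have h : F1 = Finset.univ.erase a0 := by
      ext i; simp [hF1, Finset.mem_erase, and_comm]
    rw [h, Finset.card_erase_of_mem (Finset.mem_univ _), Finset.card_univ, Fintype.card_fin]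
  have hFcard : F.card = n - 2 := by
    have h : F = (Finset.univ.erase alast).erase a0 := by
      ext i
      simp only [hF, Finset.mem_filter, Finset.mem_univ, true_and, Finset.mem_erase]
      tauto
    have h2 : a0 ∈ Finset.univ.erase alast := by
      refine Finset.mem_erase.mpr ⟨?_, Finset.mem_univ _⟩
      simp only [ha0, halast, Ne, Fin.ext_iff]
      omega
    rw [h, Finset.card_erase_of_mem h2, Finset.card_erase_of_mem (Finset.mem_univ _),
      Finset.card_univ, Fintype.card_fin]
    omega
  have hFsubF1 : F ⊆ F1 := by
    intro i hi
    rw [hmemF1]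
    exact ((hmemF i).mp hi).1
  have hinjF1 : Set.InjOn g ↑F1 := by
    intro i hi j hj hij
    exact hginj i j ((hmemF1 i).mp hi) ((hmemF1 j).mp hj) hij
  set T1 : Finset (Sym2 V) := F1.image g with hT1
  set T : Finset (Sym2 V) := F.image g with hT
  have hT1sub : T1 ⊆ G.edgeFinset := by
    intro s hs
    obtain ⟨i, hi, rfl⟩ := Finset.mem_image.mp hs
    exact hgE i ((hmemF1 i).mp hi)
  have hTsub : T ⊆ G.edgeFinset := by
    intro s hs
    obtain ⟨i, hi, rfl⟩ := Finset.mem_image.mp hs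
    exact hgE i ((hmemF1 i).mp (hFsubF1 hi))
  have hm : n - 1 ≤ G.edgeFinset.card := by
    have h1 : T1.card = n - 1 := by
      rw [hT1, Finset.card_image_of_injOn hinjF1, hF1card]
    rw [← h1]
    exact Finset.card_le_card hT1sub
  have hTcard : T.card = n - 2 := by
    rw [hT, Finset.card_image_of_injOn (hinjF1.mono (by exact_mod_cast hFsubF1)), hFcard]
  set R : Finset (Sym2 V) := G.edgeFinset \ T with hR
  set k := G.edgeFinset.card + 2 - n with hk
  have hRcard : R.card = k := by
    rw [hR, Finset.card_sdiff_of_subset hTsub, hTcard, hk]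
    omega
  set γ : {x // x ∈ R} ≃ Fin k := R.equivFinOfCardEq hRcard with hγ
  refine ⟨k, ⟨fun x w =>
    ∃ a : V, x = Sum.inl a ∧
      ((∃ v : V, w = Sum.inl v ∧ 2 ≤ (e.symm v : ℕ) ∧
          a ∈ g ⟨(e.symm v : ℕ) - 1, Nat.lt_of_le_of_lt (Nat.sub_le _ _) (e.symm v).isLt⟩) ∨
       (∃ z : Fin k, w = Sum.inr z ∧ a ∈ ((γ.symm z : {x // x ∈ R}) : Sym2 V))), ?_, ?_⟩,
    by omega⟩
  · -- acyclicity
    set ρ : V ⊕ Fin k → ℕ := Sum.elim (fun v => (e.symm v : ℕ)) (fun z => n + (z : ℕ)) with hρ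
    have hstep : ∀ x w, (∃ a : V, x = Sum.inl a ∧
        ((∃ v : V, w = Sum.inl v ∧ 2 ≤ (e.symm v : ℕ) ∧
            a ∈ g ⟨(e.symm v : ℕ) - 1, Nat.lt_of_le_of_lt (Nat.sub_le _ _) (e.symm v).isLt⟩) ∨
         (∃ z : Fin k, w = Sum.inr z ∧ a ∈ ((γ.symm z : {x // x ∈ R}) : Sym2 V)))) →
        ρ x < ρ w := by
      rintro x w ⟨a, rfl, ⟨v, rfl, hv2, has⟩ | ⟨z, rfl, has⟩⟩
      · set i := (e.symm v : ℕ) with hi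
        have hilt : i < n := (e.symm v).isLt
        set j : Fin n := ⟨i - 1, Nat.lt_of_le_of_lt (Nat.sub_le _ _) (e.symm v).isLt⟩ with hj
        have hj0 : (j : ℕ) ≠ 0 := by simp only [hj]; omega
        have hpj : (par j : ℕ) < (j : ℕ) := (hpar j hj0).1
        rw [hg] at has
        rw [Sym2.mem_iff] at has
        simp only [hρ, Sum.elim_inl]
        rcases has with rfl | rfl
        · rw [Equiv.symm_apply_apply]
          have : (j : ℕ) = i - 1 := rfl
          omega
        · rw [Equiv.symm_apply_apply]
          have : (j : ℕ) = i - 1 := rfl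
          omega
      · simp only [hρ, Sum.elim_inl, Sum.elim_inr]
        have := (e.symm a).isLt
        omega
    have mono : ∀ x w, Relation.TransGen (fun x w =>
        ∃ a : V, x = Sum.inl a ∧
          ((∃ v : V, w = Sum.inl v ∧ 2 ≤ (e.symm v : ℕ) ∧
              a ∈ g ⟨(e.symm v : ℕ) - 1, Nat.lt_of_le_of_lt (Nat.sub_le _ _) (e.symm v).isLt⟩) ∨
           (∃ z : Fin k, w = Sum.inr z ∧ a ∈ ((γ.symm z : {x // x ∈ R}) : Sym2 V)))) x w →
        ρ x < ρ w := by
      intro x w h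
      induction h with
      | single h => exact hstep _ _ h
      | tail _ h ih => exact ih.trans (hstep _ _ h)
    intro v hv
    exact lt_irrefl _ (mono v v hv)
  · -- competition graph equality
    refine SimpleGraph.ext ?_
    ext x y
    show (_ ≠ _ ∧ _) ↔ _
    constructor
    · rintro ⟨hne, w, ⟨a, rfl, hPa⟩, ⟨b, rfl, hPb⟩⟩
      have hab : a ≠ b := fun h => hne (by rw [h])
      have hsame : ∃ s : Sym2 V, s ∈ G.edgeSet ∧ a ∈ s ∧ b ∈ s := by
        rcases hPa with ⟨v, rfl, hv2, hav⟩ | ⟨z, hwz, haz⟩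
        · rcases hPb with ⟨v', hv', hv2', hbv⟩ | ⟨z', hwz', -⟩
          · rw [show v' = v from Sum.inl_injective hv'.symm] at hbv
            refine ⟨g _, ?_, hav, hbv⟩
            refine SimpleGraph.mem_edgeFinset.mp (hgE _ ?_)
            show (e.symm v : ℕ) - 1 ≠ 0
            omega
          · exact absurd hwz' (by simp)
        · rcases hPb with ⟨v', hv', -, -⟩ | ⟨z', hwz', hbz⟩
          · rw [hwz] at hv'; exact absurd hv' (by simp)
          · rw [hwz] at hwz'
            rw [show z' = z from Sum.inr_injective hwz'.symm] at hbz
            have hmem : ((γ.symm z : {x // x ∈ R}) : Sym2 V) ∈ G.edgeFinset \ T :=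
              (γ.symm z).2
            rw [Finset.mem_sdiff, SimpleGraph.mem_edgeFinset] at hmem
            exact ⟨_, hmem.1, haz, hbz⟩
      obtain ⟨s, hsE, has, hbs⟩ := hsame
      exact ⟨a, b, rfl, rfl, two_mem_adj hsE has hbs hab⟩
    · rintro ⟨a, b, rfl, rfl, hab⟩
      have hne : (Sum.inl a : V ⊕ Fin k) ≠ Sum.inl b := fun h => hab.ne (Sum.inl_injective h)
      have hsE : s(a, b) ∈ G.edgeFinset :=
        SimpleGraph.mem_edgeFinset.mpr (G.mem_edgeSet.mpr hab)
      by_cases hTmem : s(a, b) ∈ T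
      · obtain ⟨j, hjF, hgj⟩ := Finset.mem_image.mp hTmem
        obtain ⟨hj0, hj1⟩ := (hmemF j).mp hjF
        have hjlt : (j : ℕ) + 1 < n := by have := j.isLt; omega
        set v : V := e ⟨(j : ℕ) + 1, hjlt⟩ with hv
        have hsymm : e.symm v = ⟨(j : ℕ) + 1, hjlt⟩ := Equiv.symm_apply_apply _ _
        have hv2 : 2 ≤ (e.symm v : ℕ) := by rw [hsymm]; simp; omega
        have hidx : (⟨(e.symm v : ℕ) - 1,
            Nat.lt_of_le_of_lt (Nat.sub_le _ _) (e.symm v).isLt⟩ : Fin n) = j := by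
          apply Fin.ext
          rw [hsymm]
          simp
        refine ⟨hne, Sum.inl v, ⟨a, rfl, Or.inl ⟨v, rfl, hv2, ?_⟩⟩,
          ⟨b, rfl, Or.inl ⟨v, rfl, hv2, ?_⟩⟩⟩
        · rw [hidx, hgj]; exact Sym2.mem_mk_left a b
        · rw [hidx, hgj]; exact Sym2.mem_mk_right a b
      · have hRmem : s(a, b) ∈ R := by rw [hR]; exact Finset.mem_sdiff.mpr ⟨hsE, hTmem⟩
        have hback : ((γ.symm (γ ⟨s(a, b), hRmem⟩) : {x // x ∈ R}) : Sym2 V) = s(a, b) := by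
          rw [Equiv.symm_apply_apply]
        refine ⟨hne, Sum.inr (γ ⟨s(a, b), hRmem⟩),
          ⟨a, rfl, Or.inr ⟨_, rfl, ?_⟩⟩, ⟨b, rfl, Or.inr ⟨_, rfl, ?_⟩⟩⟩
        · rw [hback]; exact Sym2.mem_mk_left a b
        · rw [hback]; exact Sym2.mem_mk_right a b

theorem triangle_free_competition_number {V : Type*} [Fintype V]
    (G : SimpleGraph V) (hconn : G.Connected) (htri : G.CliqueFree 3)
    (hcard : 1 < Fintype.card V) :
    (compNum G : ℤ) = (G.edgeSet.ncard : ℤ) - (Fintype.card V : ℤ) + 2 := by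
  classical
  haveI : Fintype ↑G.edgeSet := Fintype.ofFinite _
  obtain ⟨k', hwit, hsum⟩ := upper_bound hconn hcard
  have hcn : compNum G = k' := by
    refine le_antisymm (Nat.sInf_le hwit) (le_csInf ⟨k', hwit⟩ ?_)
    intro b hb
    have hlb := lower_bound htri hcard hb
    omega
  have hE : G.edgeSet.ncard = G.edgeFinset.card := by
    rw [← SimpleGraph.coe_edgeFinset, Set.ncard_coe_finset]
  rw [hcn, hE]
  omega
end

section
/- The competition number of the octahedron graph (isomorphic to K_{2,2,2}) equals 2. -/
open SimpleGraph

theorem exists_sink {V : Type*} [Finite V] [Nonempty V] (D : V → V → Prop)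
    (h : ∀ v, ¬ Relation.TransGen D v v) : ∃ m, ∀ y, ¬ D m y := by
  by_contra hc
  push_neg at hc
  choose f hf using hc
  obtain ⟨x0⟩ := ‹Nonempty V›
  set seq : ℕ → V := fun n => f^[n] x0 with hseq
  have step : ∀ n, D (seq n) (seq (n+1)) := by
    intro n
    have : seq (n+1) = f (seq n) := Function.iterate_succ_apply' f n x0
    rw [this]; exact hf _
  have chain : ∀ i j, i < j → Relation.TransGen D (seq i) (seq j) := by
    intro i j hij
    induction j with
    | zero => omega
    | succ j ih =>
      rcases Nat.lt_succ_iff_lt_or_eq.mp hij with h' | rfl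
      · exact (ih h').tail (step j)
      · exact Relation.TransGen.single (step i)
  obtain ⟨i, j, hne, heq⟩ := Finite.exists_ne_map_eq_of_infinite seq
  rcases hne.lt_or_gt with h' | h'
  · exact h _ (heq ▸ chain i j h')
  · exact h _ (heq ▸ chain j i h')

abbrev V6 := (i : Fin 3) × Fin 2
abbrev V8 := V6 ⊕ Fin 2


def rank8 : V8 → ℕ
  | Sum.inl ⟨0,0⟩ => 0
  | Sum.inl ⟨1,0⟩ => 1
  | Sum.inl ⟨2,0⟩ => 2
  | Sum.inl ⟨0,1⟩ => 3
  | Sum.inl ⟨1,1⟩ => 4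
  | Sum.inl ⟨2,1⟩ => 5
  | Sum.inr 0 => 6
  | Sum.inr 1 => 7

def D2b (x y : V8) : Bool :=
  decide ((rank8 x, rank8 y) ∈ [(0,3),(1,3),(2,3),(3,5),(4,5),(2,5),(0,6),(4,6),(5,6),(3,7),(1,7),(5,7)])

theorem D2_rank : ∀ x y : V8, D2b x y = true → rank8 x < rank8 y := by decide

theorem D2_acyclic : DigraphAcyclic (fun x y : V8 => D2b x y = true) := by
  intro v hv
  have mono : ∀ a b : V8, Relation.TransGen (fun x y => D2b x y = true) a b →
      rank8 a < rank8 b := by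
    intro a b h
    induction h with
    | single h => exact D2_rank _ _ h
    | tail _ h ih => exact ih.trans (D2_rank _ _ h)
  exact lt_irrefl _ (mono v v hv)

theorem key : ∀ x y : V8, ((x ≠ y ∧ ∃ v, D2b x v = true ∧ D2b y v = true) ↔
    (∃ a b : V6, x = Sum.inl a ∧ y = Sum.inl b ∧ a.1 ≠ b.1)) := by decide

theorem witness2 :
    IsCompetitionWitness (completeMultipartiteGraph (fun _ : Fin 3 => Fin 2)) 2 := by
  refine ⟨fun x y => D2b x y = true, D2_acyclic, ?_⟩
  ext x y
  show (x ≠ y ∧ ∃ v, D2b x v = true ∧ D2b y v = true) ↔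
    (∃ a b : V6, x = Sum.inl a ∧ y = Sum.inl b ∧
      (completeMultipartiteGraph (fun _ : Fin 3 => Fin 2)).Adj a b)
  exact key x y

abbrev G6 := completeMultipartiteGraph (fun _ : Fin 3 => Fin 2)

theorem fin3_ne_succ : ∀ i : Fin 3, i ≠ i + 1 := by decide

theorem not_witness0 : ¬ IsCompetitionWitness G6 0 := by
  rintro ⟨D, hac, heq⟩
  haveI : Nonempty (V6 ⊕ Fin 0) := ⟨Sum.inl ⟨0, 0⟩⟩
  obtain ⟨m, hm⟩ := exists_sink D hac
  rcases m with u | f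
  · have hadj : (CompetitionGraph D).Adj (Sum.inl u) (Sum.inl ⟨u.1 + 1, 0⟩) := by
      rw [heq]
      exact ⟨u, ⟨u.1 + 1, 0⟩, rfl, rfl, fin3_ne_succ u.1⟩
    obtain ⟨-, v, hv, -⟩ := hadj
    exact hm v hv
  · exact f.elim0

theorem not_witness1 : ¬ IsCompetitionWitness G6 1 := by
  rintro ⟨D, hac, heq⟩
  haveI : Nonempty (V6 ⊕ Fin 1) := ⟨Sum.inl ⟨0, 0⟩⟩
  obtain ⟨m, hm⟩ := exists_sink D hac
  -- the sink must be the isolated vertex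
  rcases m with u | j
  · have hadj : (CompetitionGraph D).Adj (Sum.inl u) (Sum.inl ⟨u.1 + 1, 0⟩) := by
      rw [heq]
      exact ⟨u, ⟨u.1 + 1, 0⟩, rfl, rfl, fin3_ne_succ u.1⟩
    obtain ⟨-, v, hv, -⟩ := hadj
    exact (hm v hv).elim
  obtain rfl : j = 0 := Subsingleton.elim _ _
  set z : V6 ⊕ Fin 1 := Sum.inr 0 with hzdef
  -- find a vertex w ≠ z whose only possible out-neighbor is z
  haveI : Nonempty {x : V6 ⊕ Fin 1 // x ≠ z} := ⟨⟨Sum.inl ⟨0, 0⟩, by simp [hzdef]⟩⟩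
  obtain ⟨w', hw'⟩ := exists_sink (fun a b : {x : V6 ⊕ Fin 1 // x ≠ z} => D a.1 b.1)
    (by
      intro v hv
      exact hac v.1 (Relation.TransGen.lift Subtype.val (fun a b h => h) v v hv))
  have hout : ∀ y, D w'.1 y → y = z := by
    intro y hy
    by_contra hne
    exact hw' ⟨y, hne⟩ hy
  -- w' is a graph vertex
  obtain ⟨u, hu⟩ : ∃ u : V6, w'.1 = Sum.inl u := by
    rcases hw : w'.1 with u | j
    · exact ⟨u, rfl⟩
    · exact absurd (by rw [hw, Subsingleton.elim j 0]) w'.2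
  -- both same-part neighbors of u must prey on z
  have hprey : ∀ s : Fin 2, D (Sum.inl ⟨u.1 + 1, s⟩) z := by
    intro s
    have hadj : (CompetitionGraph D).Adj (Sum.inl u) (Sum.inl ⟨u.1 + 1, s⟩) := by
      rw [heq]
      exact ⟨u, ⟨u.1 + 1, s⟩, rfl, rfl, fin3_ne_succ u.1⟩
    obtain ⟨-, v, hv1, hv2⟩ := hadj
    have : v = z := hout v (hu ▸ hv1)
    exact this ▸ hv2
  -- so the two same-part neighbors compete, contradiction
  have hadj2 : (CompetitionGraph D).Adj (Sum.inl ⟨u.1 + 1, 0⟩) (Sum.inl ⟨u.1 + 1, 1⟩) :=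
    ⟨by simp, z, hprey 0, hprey 1⟩
  rw [heq] at hadj2
  obtain ⟨a, b, ha, hb, hab⟩ := hadj2
  obtain rfl := Sum.inl_injective ha
  obtain rfl := Sum.inl_injective hb
  exact hab rfl

theorem competition_number_octahedron :
    compNum (SimpleGraph.completeMultipartiteGraph (fun _ : Fin 3 => Fin 2)) = 2 := by
  have h2 := witness2
  have h2' : 2 ∈ {k | IsCompetitionWitness G6 k} := h2
  have hle : compNum G6 ≤ 2 := Nat.sInf_le h2'
  have hmem : IsCompetitionWitness G6 (compNum G6) := Nat.sInf_mem ⟨2, h2'⟩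
  have h0 : compNum G6 ≠ 0 := fun e => not_witness0 (e ▸ hmem)
  have h1 : compNum G6 ≠ 1 := fun e => not_witness1 (e ▸ hmem)
  show compNum G6 = 2
  omega
end

section
/- The competition number of the icosahedron graph is at most 4; explicitly, there exists an acyclic digraph D on the 12 icosahedron vertices together with 4 extra vertices whose competition graph is the icosahedron plus 4 isolated vertices. -/
open SimpleGraph

/-- The edge list of the icosahedron graph (pentagonal antiprism on `1..10` together
with apexes `0` and `11`). -/
def icosaEdges : List (ℕ × ℕ) :=
  [(0,1),(0,2),(0,3),(0,4),(0,5),(1,2),(2,3),(3,4),(4,5),(5,1),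
   (11,6),(11,7),(11,8),(11,9),(11,10),(6,7),(7,8),(8,9),(9,10),(10,6),
   (1,6),(1,7),(2,7),(2,8),(3,8),(3,9),(4,9),(4,10),(5,10),(5,6)]

/-- The icosahedron graph: the 5-regular graph on 12 vertices with 30 edges
arising as the 1-skeleton of the icosahedron. -/
def Icosahedron : SimpleGraph (Fin 12) :=
  SimpleGraph.fromRel (fun i j => ((i : ℕ), (j : ℕ)) ∈ icosaEdges)

/-- Vertex abbreviation. -/
abbrev IV := Fin 12 ⊕ Fin 4

def iv (n : Fin 12) : IV := Sum.inl n
def av (n : Fin 4) : IV := Sum.inr n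

/-- Out-edge list of the witness digraph: members of each clique point to its prey. -/
def icoD : List (IV × IV) :=
  [(iv 0, iv 3), (iv 1, iv 3), (iv 2, iv 3),
   (iv 0, iv 4), (iv 2, iv 4), (iv 3, iv 4),
   (iv 0, iv 5), (iv 3, iv 5), (iv 4, iv 5),
   (iv 0, iv 6), (iv 4, iv 6), (iv 5, iv 6),
   (iv 0, iv 7), (iv 5, iv 7), (iv 1, iv 7),
   (iv 1, iv 8), (iv 6, iv 8), (iv 7, iv 8),
   (iv 2, iv 9), (iv 7, iv 9), (iv 8, iv 9),
   (iv 3, iv 10), (iv 8, iv 10), (iv 9, iv 10),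
   (iv 4, iv 11), (iv 9, iv 11), (iv 10, iv 11),
   (iv 5, av 0), (iv 10, av 0), (iv 6, av 0),
   (iv 11, av 1), (iv 6, av 1), (iv 7, av 1),
   (iv 11, av 2), (iv 8, av 2), (iv 9, av 2),
   (iv 11, av 3), (iv 10, av 3)]

def Dw (x y : IV) : Prop := (x, y) ∈ icoD

instance : DecidableRel Dw := fun x y =>
  decidable_of_iff (∃ p ∈ icoD, p = (x, y)) (by simp [Dw])

instance : DecidableRel Icosahedron.Adj := fun i j =>
  decidable_of_iff _ (SimpleGraph.fromRel_adj _ i j).symm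

def rk : IV → ℕ
  | Sum.inl i => i
  | Sum.inr j => 12 + j

lemma Dw_rk : ∀ x y, Dw x y → rk x < rk y := by decide

theorem competition_number_icosahedron_upper_bound :
    (∃ D : (Fin 12 ⊕ Fin 4) → (Fin 12 ⊕ Fin 4) → Prop,
      DigraphAcyclic D ∧ CompetitionGraph D = addIsolated Icosahedron 4) ∧
    compNum Icosahedron ≤ 4 := by
  have hwit : ∃ D : (Fin 12 ⊕ Fin 4) → (Fin 12 ⊕ Fin 4) → Prop,
      DigraphAcyclic D ∧ CompetitionGraph D = addIsolated Icosahedron 4 := by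
    refine ⟨Dw, ?_, ?_⟩
    · intro v hv
      have h : ∀ w, Relation.TransGen Dw v w → rk v < rk w := by
        intro w hw
        induction hw with
        | single h => exact Dw_rk _ _ h
        | tail _ h ih => exact lt_trans ih (Dw_rk _ _ h)
      exact absurd (h v hv) (lt_irrefl _)
    · ext x y
      show (x ≠ y ∧ ∃ v, Dw x v ∧ Dw y v) ↔ _
      show _ ↔ (∃ a b, x = Sum.inl a ∧ y = Sum.inl b ∧ Icosahedron.Adj a b)
      revert x y
      decide
  exact ⟨hwit, Nat.sInf_le hwit⟩
end
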